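/- Let k ≥ 1 and let a_1,…,a_k be positive real numbers, and let α_1,…,α_k, λ_1,…,λ_k be real numbers (conventions a_0 = α_{k+1} = 0, n = 2k). Suppose α_1^2 + … + α_k^2 = a_1λ_1 + … + a_kλ_k, and suppose that for each i = 1,…,k the quantity Hodge_i := det(a_{i-1}+a_i, α_i+α_{i+1}; α_i, λ_i) + det(a_i+a_{i+1}, α_i+α_{i+1}; α_{i+1}, λ_i) is ≤ 0 (with the term involving a_{k+1} omitted for i = k). Then Hodge_i = 0 for all i, and det(a_{i-1}+a_i, a_i+a_{i+1}; α_i, α_{i+1}) = 0 for all i = 1,…,k-1. -/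

import Mathlib

/-- Telescoping reindexing identity: distributing each `α i ^ 2` as
`a i / s i + a (i-1) / s i` over adjacent terms. -/
lemma stmt_3_reindex (a α : ℕ → ℝ) (ha0 : a 0 = 0) :
    ∀ k : ℕ, 1 ≤ k → (∀ i, 1 ≤ i → i ≤ k → a (i - 1) + a i ≠ 0) →
    (∑ i ∈ Finset.Icc 1 k,
      (a i * α i ^ 2 / (a (i - 1) + a i) +
        (if i = k then 0 else a i * α (i + 1) ^ 2 / (a i + a (i + 1)))))
      = ∑ i ∈ Finset.Icc 1 k, α i ^ 2 := by
  intro k hk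
  induction k, hk using Nat.le_induction with
  | base =>
    intro hs
    have h1 := hs 1 le_rfl le_rfl
    simp only [Finset.Icc_self, Finset.sum_singleton, if_pos rfl, ↓reduceIte, add_zero]
    simp only [ha0, zero_add] at h1 ⊢
    field_simp
  | succ k hk ih =>
    intro hs
    have hsk : ∀ i, 1 ≤ i → i ≤ k → a (i - 1) + a i ≠ 0 := fun i h1 h2 =>
      hs i h1 (h2.trans (Nat.le_succ k))
    rw [Finset.sum_Icc_succ_top (by omega), Finset.sum_Icc_succ_top (by omega)]
    have hcongr : (∑ i ∈ Finset.Icc 1 k,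
        (a i * α i ^ 2 / (a (i - 1) + a i) +
          (if i = k + 1 then 0 else a i * α (i + 1) ^ 2 / (a i + a (i + 1)))))
        = (∑ i ∈ Finset.Icc 1 k,
          ((a i * α i ^ 2 / (a (i - 1) + a i) +
            (if i = k then 0 else a i * α (i + 1) ^ 2 / (a i + a (i + 1)))) +
           (if i = k then a i * α (i + 1) ^ 2 / (a i + a (i + 1)) else 0))) := by
      apply Finset.sum_congr rfl
      intro i hi
      simp only [Finset.mem_Icc] at hi
      have : i ≠ k + 1 := by omega
      rw [if_neg this]
      by_cases h : i = k
      · rw [if_pos h, if_pos h]; ring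
      · rw [if_neg h, if_neg h]; ring
    rw [hcongr, Finset.sum_add_distrib, ih hsk,
      Finset.sum_ite_eq' (Finset.Icc 1 k) k
        (fun i => a i * α (i + 1) ^ 2 / (a i + a (i + 1))),
      if_pos (by simp [Finset.mem_Icc]; omega)]
    have hk1 : a k + a (k + 1) ≠ 0 := by
      have := hs (k + 1) (by omega) le_rfl
      simpa using this
    have : a k * α (k + 1) ^ 2 / (a k + a (k + 1)) +
        (a (k + 1) * α (k + 1) ^ 2 / (a (k + 1 - 1) + a (k + 1)) +
          (if k + 1 = k + 1 then (0:ℝ) else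
            a (k + 1) * α (k + 1 + 1) ^ 2 / (a (k + 1) + a (k + 1 + 1))))
        = α (k + 1) ^ 2 := by
      rw [if_pos rfl, add_zero]
      simp only [Nat.add_sub_cancel]
      field_simp
    linarith [this]

/-- Corollary 2.9 of the paper, numerical core (`n = 2k`): if
`∑ α i ^ 2 = ∑ a i * λ i` and each Hodge-type expression `Hodge i` is `≤ 0`
(the second 2×2 determinant being omitted for `i = k`), then every `Hodge i`
vanishes and so do the 2×2 determinants `det (a (i-1)+a i, a i+a (i+1); α i, α (i+1))`. -/
theorem stmt_3 (k : ℕ) (hk : 1 ≤ k) (a α lam : ℕ → ℝ)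
    (ha0 : a 0 = 0) (hak1 : a (k + 1) = 0) (hαk1 : α (k + 1) = 0)
    (hpos : ∀ i, 1 ≤ i → i ≤ k → 0 < a i)
    (hP : (∑ i ∈ Finset.Icc 1 k, (α i) ^ 2) = ∑ i ∈ Finset.Icc 1 k, a i * lam i)
    (hodge : ∀ i, 1 ≤ i → i ≤ k →
      Matrix.det !![a (i - 1) + a i, α i + α (i + 1); α i, lam i] +
        (if i = k then 0 else
          Matrix.det !![a i + a (i + 1), α i + α (i + 1); α (i + 1), lam i]) ≤ 0) :
    (∀ i, 1 ≤ i → i ≤ k →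
      Matrix.det !![a (i - 1) + a i, α i + α (i + 1); α i, lam i] +
        (if i = k then 0 else
          Matrix.det !![a i + a (i + 1), α i + α (i + 1); α (i + 1), lam i]) = 0) ∧
    (∀ i, 1 ≤ i → i ≤ k - 1 →
      Matrix.det !![a (i - 1) + a i, a i + a (i + 1); α i, α (i + 1)] = 0) := by
  -- notation
  set H : ℕ → ℝ := fun i =>
    Matrix.det !![a (i - 1) + a i, α i + α (i + 1); α i, lam i] +
      (if i = k then 0 else
        Matrix.det !![a i + a (i + 1), α i + α (i + 1); α (i + 1), lam i]) with hH
  set w : ℕ → ℝ := fun i =>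
    (a (i - 1) + a i) + (if i = k then 0 else a i + a (i + 1)) with hw
  set D : ℕ → ℝ := fun i => (a (i - 1) + a i) * α (i + 1) - (a i + a (i + 1)) * α i with hD
  set X : ℕ → ℝ := fun i => a i / w i * (-H i) with hX
  set Y : ℕ → ℝ := fun i => if i = k then 0 else
    a i / (w i * (a (i - 1) + a i) * (a i + a (i + 1))) * (D i) ^ 2 with hY
  -- positivity facts
  have hs_pos : ∀ i, 1 ≤ i → i ≤ k → 0 < a (i - 1) + a i := by
    intro i h1 h2
    have hai := hpos i h1 h2
    rcases Nat.eq_or_lt_of_le h1 with h | h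
    · subst h
      simpa [ha0] using hai
    · have := hpos (i - 1) (by omega) (by omega)
      linarith
  have hw_pos : ∀ i, 1 ≤ i → i ≤ k → 0 < w i := by
    intro i h1 h2
    by_cases h : i = k
    · have := hs_pos i h1 h2
      simp only [hw, if_pos h, add_zero]
      exact this
    · have := hs_pos i h1 h2
      have h3 : i + 1 ≤ k := by omega
      have h4 : 0 < a (i + 1 - 1) + a (i + 1) := hs_pos (i + 1) (by omega) h3
      simp only [Nat.add_sub_cancel] at h4
      simp only [hw, if_neg h]; linarith
  have hX_nonneg : ∀ i ∈ Finset.Icc 1 k, 0 ≤ X i := by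
    intro i hi
    simp only [Finset.mem_Icc] at hi
    have h1 := hodge i hi.1 hi.2
    have h2 := hpos i hi.1 hi.2
    have h3 := hw_pos i hi.1 hi.2
    have : 0 ≤ -H i := by simp only [hH]; linarith
    positivity
  have hY_nonneg : ∀ i ∈ Finset.Icc 1 k, 0 ≤ Y i := by
    intro i hi
    simp only [Finset.mem_Icc] at hi
    simp only [hY]
    by_cases h : i = k
    · simp [h]
    · rw [if_neg h]
      have h3 : i + 1 ≤ k := by omega
      have h4 : 0 < a (i + 1 - 1) + a (i + 1) := hs_pos (i + 1) (by omega) h3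
      simp only [Nat.add_sub_cancel] at h4
      have := hpos i hi.1 hi.2
      have := hs_pos i hi.1 hi.2
      have := hw_pos i hi.1 hi.2
      positivity
  -- per-term identity
  have hterm : ∀ i ∈ Finset.Icc 1 k, X i + Y i =
      (a i * α i ^ 2 / (a (i - 1) + a i) +
        (if i = k then 0 else a i * α (i + 1) ^ 2 / (a i + a (i + 1)))) - a i * lam i := by
    intro i hi
    simp only [Finset.mem_Icc] at hi
    have hs := hs_pos i hi.1 hi.2
    have hs' := hs.ne'
    simp only [hX, hY, hH, hD, hw, Matrix.det_fin_two_of]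
    by_cases h : i = k
    · subst h
      simp only [if_pos rfl, ↓reduceIte, add_zero, hαk1]
      field_simp
      ring
    · rw [if_neg h, if_neg h, if_neg h, if_neg h]
      have h3 : i + 1 ≤ k := by omega
      have h4 : 0 < a (i + 1 - 1) + a (i + 1) := hs_pos (i + 1) (by omega) h3
      simp only [Nat.add_sub_cancel] at h4
      have h4' := h4.ne'
      have hw0 : (a (i - 1) + a i) + (a i + a (i + 1)) ≠ 0 := by linarith
      field_simp
      ring
  -- sum is zero
  have hsum : ∑ i ∈ Finset.Icc 1 k, (X i + Y i) = 0 := by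
    rw [Finset.sum_congr rfl hterm, Finset.sum_sub_distrib,
      stmt_3_reindex a α ha0 k hk (fun i h1 h2 => (hs_pos i h1 h2).ne'), hP, sub_self]
  have hzero : ∀ i ∈ Finset.Icc 1 k, X i + Y i = 0 := by
    rw [← Finset.sum_eq_zero_iff_of_nonneg
      (fun i hi => add_nonneg (hX_nonneg i hi) (hY_nonneg i hi))]
    exact hsum
  have hXY : ∀ i ∈ Finset.Icc 1 k, X i = 0 ∧ Y i = 0 := by
    intro i hi
    have h0 := hzero i hi
    have h1 := hX_nonneg i hi
    have h2 := hY_nonneg i hi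
    constructor <;> linarith
  constructor
  · intro i h1 h2
    have hXi := (hXY i (Finset.mem_Icc.mpr ⟨h1, h2⟩)).1
    have ha := hpos i h1 h2
    have hwp := hw_pos i h1 h2
    have : a i / w i ≠ 0 := by positivity
    have hHi : -H i = 0 := by
      rcases mul_eq_zero.mp hXi with h | h
      · exact absurd h this
      · exact h
    simpa [hH] using (neg_eq_zero.mp hHi)
  · intro i h1 h2
    have h2' : i ≤ k := by omega
    have hik : i ≠ k := by omega
    have hYi := (hXY i (Finset.mem_Icc.mpr ⟨h1, h2'⟩)).2
    rw [hY] at hYi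
    simp only [if_neg hik] at hYi
    have ha := hpos i h1 h2'
    have hs := hs_pos i h1 h2'
    have hwp := hw_pos i h1 h2'
    have h3 : i + 1 ≤ k := by omega
    have h4 : 0 < a (i + 1 - 1) + a (i + 1) := hs_pos (i + 1) (by omega) h3
    simp only [Nat.add_sub_cancel] at h4
    have hc : a i / (w i * (a (i - 1) + a i) * (a i + a (i + 1))) ≠ 0 := by positivity
    have hD2 : (D i) ^ 2 = 0 := by
      rcases mul_eq_zero.mp hYi with h | h
      · exact absurd h hc
      · exact h
    have hDi : D i = 0 := by
      exact pow_eq_zero_iff (by norm_num) |>.mp hD2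
    simp only [hD] at hDi
    simp [Matrix.det_fin_two_of]
    linarith
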